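/- Let a, b > 0 and v ∈ (0, 1) with 0 < v ≤ 1/2. Then (1 − v)a + v·b ≤ (1 − v)(√a − √b)² − r₁(⁴√(ab) − √b)² + K(⁴√h, 2)^{−r̂₁} · a^{1−v} b^{v}, where h = b/a, r = min{v, 1 − v}, r₁ = min{2r, 1 − 2r} and r̂₁ = min{2r₁, 1 − 2r₁}. -/
import Mathlib

/-- The Kantorovich constant `K(t, 2) = (t + 1)^2 / (4 t)`. -/
noncomputable def Kant (t : ℝ) : ℝ := (t + 1) ^ 2 / (4 * t)

lemma Kant_pos {t : ℝ} (ht : 0 < t) : 0 < Kant t := by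
  unfold Kant
  have h1 : 0 < t + 1 := by linarith
  exact div_pos (pow_pos h1 2) (by linarith)

lemma Kant_inv {t : ℝ} (ht : 0 < t) : Kant t⁻¹ = Kant t := by
  unfold Kant
  field_simp
  ring

lemma eq_of_log_eq {x y : ℝ} (hx : 0 < x) (hy : 0 < y)
    (h : Real.log x = Real.log y) : x = y := by
  rw [← Real.exp_log hx, ← Real.exp_log hy, h]

/-- Zuo–Shi–Fujii inequality. -/
lemma zuo {x y l : ℝ} (hx : 0 < x) (hy : 0 < y) (hl0 : 0 ≤ l) (hl1 : l ≤ 1) :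
    Kant (y / x) ^ (min l (1 - l)) * (x ^ (1 - l) * y ^ l) ≤ (1 - l) * x + l * y := by
  have hc : 0 < (x + y) / 2 := by positivity
  have hK : Kant (y / x) = ((x + y) / 2) ^ 2 / (x * y) := by
    unfold Kant
    field_simp
    ring
  have hKpos : 0 < Kant (y / x) := by rw [hK]; positivity
  rcases le_total l (1 / 2) with hhalf | hhalf
  · have hmin : min l (1 - l) = l := by rw [min_eq_left]; linarith
    have hkey : Kant (y / x) ^ l * (x ^ (1 - l) * y ^ l)
        = ((x + y) / 2) ^ (2 * l) * x ^ (1 - 2 * l) := by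
      apply eq_of_log_eq
      · exact mul_pos (Real.rpow_pos_of_pos hKpos _)
          (mul_pos (Real.rpow_pos_of_pos hx _) (Real.rpow_pos_of_pos hy _))
      · exact mul_pos (Real.rpow_pos_of_pos hc _) (Real.rpow_pos_of_pos hx _)
      rw [Real.log_mul (Real.rpow_pos_of_pos hKpos _).ne'
          (mul_pos (Real.rpow_pos_of_pos hx _) (Real.rpow_pos_of_pos hy _)).ne',
        Real.log_mul (Real.rpow_pos_of_pos hx _).ne' (Real.rpow_pos_of_pos hy _).ne',
        Real.log_mul (Real.rpow_pos_of_pos hc _).ne' (Real.rpow_pos_of_pos hx _).ne',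
        Real.log_rpow hKpos, Real.log_rpow hx, Real.log_rpow hy,
        Real.log_rpow hc, Real.log_rpow hx, hK,
        Real.log_div (by positivity) (by positivity),
        Real.log_mul hx.ne' hy.ne', Real.log_pow]
      push_cast
      ring
    rw [hmin, hkey]
    have hg := Real.geom_mean_le_arith_mean2_weighted (w₁ := 2 * l) (w₂ := 1 - 2 * l)
      (p₁ := (x + y) / 2) (p₂ := x) (by linarith) (by linarith) hc.le hx.le (by ring)
    have he : (2 * l) * ((x + y) / 2) + (1 - 2 * l) * x = (1 - l) * x + l * y := by ring
    linarith
  · have hmin : min l (1 - l) = 1 - l := by rw [min_eq_right]; linarith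
    have hkey : Kant (y / x) ^ (1 - l) * (x ^ (1 - l) * y ^ l)
        = ((x + y) / 2) ^ (2 - 2 * l) * y ^ (2 * l - 1) := by
      apply eq_of_log_eq
      · exact mul_pos (Real.rpow_pos_of_pos hKpos _)
          (mul_pos (Real.rpow_pos_of_pos hx _) (Real.rpow_pos_of_pos hy _))
      · exact mul_pos (Real.rpow_pos_of_pos hc _) (Real.rpow_pos_of_pos hy _)
      rw [Real.log_mul (Real.rpow_pos_of_pos hKpos _).ne'
          (mul_pos (Real.rpow_pos_of_pos hx _) (Real.rpow_pos_of_pos hy _)).ne',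
        Real.log_mul (Real.rpow_pos_of_pos hx _).ne' (Real.rpow_pos_of_pos hy _).ne',
        Real.log_mul (Real.rpow_pos_of_pos hc _).ne' (Real.rpow_pos_of_pos hy _).ne',
        Real.log_rpow hKpos, Real.log_rpow hx, Real.log_rpow hy,
        Real.log_rpow hc, Real.log_rpow hy, hK,
        Real.log_div (by positivity) (by positivity),
        Real.log_mul hx.ne' hy.ne', Real.log_pow]
      push_cast
      ring
    rw [hmin, hkey]
    have hg := Real.geom_mean_le_arith_mean2_weighted (w₁ := 2 - 2 * l) (w₂ := 2 * l - 1)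
      (p₁ := (x + y) / 2) (p₂ := y) (by linarith) (by linarith) hc.le hy.le (by ring)
    have he : (2 - 2 * l) * ((x + y) / 2) + (2 * l - 1) * y = (1 - l) * x + l * y := by ring
    linarith

lemma amgm_step {c P Q g : ℝ} (hc : 0 < c) (hP : 0 < P) (hQ : 0 < Q) (hg : 0 ≤ g)
    (hPQ : P * Q = g ^ 2) : 2 * g - c * P ≤ c⁻¹ * Q := by
  have h1 : Real.sqrt P ^ 2 = P := Real.sq_sqrt hP.le
  have h2 : Real.sqrt Q ^ 2 = Q := Real.sq_sqrt hQ.le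
  have h3 : Real.sqrt P * Real.sqrt Q = g := by
    rw [← Real.sqrt_mul hP.le, hPQ, Real.sqrt_sq hg]
  have key : 2 * c * g ≤ c ^ 2 * P + Q := by
    nlinarith [sq_nonneg (c * Real.sqrt P - Real.sqrt Q)]
  rw [inv_mul_eq_div, le_div_iff₀ hc]
  nlinarith [key]

theorem stmt_5 (a b v : ℝ) (ha : 0 < a) (hb : 0 < b) (hv0 : 0 < v) (hv : v ≤ 1 / 2)
    (h r r1 rh1 : ℝ) (hh : h = b / a) (hr : r = min v (1 - v))
    (hr1 : r1 = min (2 * r) (1 - 2 * r)) (hrh1 : rh1 = min (2 * r1) (1 - 2 * r1)) :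
    (1 - v) * a + v * b ≤
      (1 - v) * (Real.sqrt a - Real.sqrt b) ^ 2
        - r1 * ((a * b) ^ ((1 : ℝ) / 4) - Real.sqrt b) ^ 2
        + Kant (h ^ ((1 : ℝ) / 4)) ^ (-rh1) * (a ^ (1 - v) * b ^ v) := by
  have hab : 0 < a * b := mul_pos ha hb
  set sa := Real.sqrt a with hsadef
  set sb := Real.sqrt b with hsbdef
  set q := (a * b) ^ ((1 : ℝ) / 4) with hqdef
  have hsa : 0 < sa := Real.sqrt_pos.mpr ha
  have hsb : 0 < sb := Real.sqrt_pos.mpr hb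
  have hq : 0 < q := Real.rpow_pos_of_pos hab _
  have hsa2 : sa ^ 2 = a := Real.sq_sqrt ha.le
  have hsb2 : sb ^ 2 = b := Real.sq_sqrt hb.le
  have hlsa : Real.log sa = Real.log a / 2 := Real.log_sqrt ha.le
  have hlsb : Real.log sb = Real.log b / 2 := Real.log_sqrt hb.le
  have hlq : Real.log q = (Real.log a + Real.log b) / 4 := by
    rw [hqdef, Real.log_rpow hab, Real.log_mul ha.ne' hb.ne']
    ring
  have hq2 : q ^ 2 = sa * sb := by
    apply eq_of_log_eq (by positivity) (mul_pos hsa hsb)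
    rw [Real.log_pow, Real.log_mul hsa.ne' hsb.ne', hlq, hlsa, hlsb]
    push_cast
    ring
  have hhpos : 0 < h := by rw [hh]; exact div_pos hb ha
  have ht : 0 < h ^ ((1 : ℝ) / 4) := Real.rpow_pos_of_pos hhpos _
  have hlh : Real.log h = Real.log b - Real.log a := by
    rw [hh, Real.log_div hb.ne' ha.ne']
  have hKpos : 0 < Kant (h ^ ((1 : ℝ) / 4)) := Kant_pos ht
  set C := Kant (h ^ ((1 : ℝ) / 4)) ^ rh1 with hCdef
  have hC : 0 < C := Real.rpow_pos_of_pos hKpos _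
  have hCneg : Kant (h ^ ((1 : ℝ) / 4)) ^ (-rh1) = C⁻¹ := by
    rw [hCdef, ← Real.rpow_neg hKpos.le]
  set P := a ^ v * b ^ (1 - v) with hPdef
  set Q := a ^ (1 - v) * b ^ v with hQdef
  have hP : 0 < P := mul_pos (Real.rpow_pos_of_pos ha _) (Real.rpow_pos_of_pos hb _)
  have hQ : 0 < Q := mul_pos (Real.rpow_pos_of_pos ha _) (Real.rpow_pos_of_pos hb _)
  have hPQ : P * Q = (sa * sb) ^ 2 := by
    have h1 : P * Q = a * b := by
      apply eq_of_log_eq (mul_pos hP hQ) hab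
      rw [Real.log_mul hP.ne' hQ.ne', Real.log_mul ha.ne' hb.ne',
        hPdef, hQdef, Real.log_mul (Real.rpow_pos_of_pos ha _).ne'
          (Real.rpow_pos_of_pos hb _).ne',
        Real.log_mul (Real.rpow_pos_of_pos ha _).ne' (Real.rpow_pos_of_pos hb _).ne',
        Real.log_rpow ha, Real.log_rpow hb, Real.log_rpow ha, Real.log_rpow hb]
      ring
    rw [h1, mul_pow, hsa2, hsb2]
  have hrv : r = v := by rw [hr, min_eq_left (by linarith)]
  have hstep : 2 * (sa * sb) - C * P ≤ C⁻¹ * Q :=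
    amgm_step hC hP hQ (by positivity) hPQ
  rw [hCneg]
  rcases le_total v (1 / 4) with hcase | hcase
  · -- case v ≤ 1/4 : r1 = 2v
    have hr1v : r1 = 2 * v := by rw [hr1, hrv, min_eq_left (by linarith)]
    have hrh1v : rh1 = min (4 * v) (1 - 4 * v) := by
      rw [hrh1, hr1v]
      congr 1 <;> ring
    have hmono : b ^ (1 - 4 * v) * (q * sb) ^ (4 * v) = P := by
      apply eq_of_log_eq (mul_pos (Real.rpow_pos_of_pos hb _)
        (Real.rpow_pos_of_pos (mul_pos hq hsb) _)) hP
      rw [Real.log_mul (Real.rpow_pos_of_pos hb _).ne'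
          (Real.rpow_pos_of_pos (mul_pos hq hsb) _).ne',
        Real.log_rpow hb, Real.log_rpow (mul_pos hq hsb),
        Real.log_mul hq.ne' hsb.ne', hlq, hlsb,
        hPdef, Real.log_mul (Real.rpow_pos_of_pos ha _).ne'
          (Real.rpow_pos_of_pos hb _).ne',
        Real.log_rpow ha, Real.log_rpow hb]
      ring
    have harg : (q * sb) / b = (h ^ ((1 : ℝ) / 4))⁻¹ := by
      apply eq_of_log_eq (by positivity) (by positivity)
      rw [Real.log_div (mul_pos hq hsb).ne' hb.ne', Real.log_mul hq.ne' hsb.ne',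
        Real.log_inv, Real.log_rpow hhpos, hlq, hlsb, hlh]
      ring
    have hz := zuo (x := b) (y := q * sb) (l := 4 * v) hb (mul_pos hq hsb)
      (by linarith) (by linarith)
    rw [harg, Kant_inv ht, hmono, ← hrh1v, ← hCdef] at hz
    have hid : (1 - v) * a + v * b -
        ((1 - v) * (sa - sb) ^ 2 - (2 * v) * (q - sb) ^ 2)
        = 2 * (sa * sb) - ((1 - 4 * v) * b + 4 * v * (q * sb)) := by
      linear_combination (v - 1) * hsa2 + (3 * v - 1) * hsb2 + 2 * v * hq2
    rw [hr1v]
    linarith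
  · -- case v ≥ 1/4 : r1 = 1 - 2v
    have hr1v : r1 = 1 - 2 * v := by rw [hr1, hrv, min_eq_right (by linarith)]
    have hrh1v : rh1 = min (2 - 4 * v) (1 - (2 - 4 * v)) := by
      rw [hrh1, hr1v]
      congr 1 <;> ring
    have hmono : (sa * sb) ^ (1 - (2 - 4 * v)) * (q * sb) ^ (2 - 4 * v) = P := by
      apply eq_of_log_eq (mul_pos (Real.rpow_pos_of_pos (mul_pos hsa hsb) _)
        (Real.rpow_pos_of_pos (mul_pos hq hsb) _)) hP
      rw [Real.log_mul (Real.rpow_pos_of_pos (mul_pos hsa hsb) _).ne'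
          (Real.rpow_pos_of_pos (mul_pos hq hsb) _).ne',
        Real.log_rpow (mul_pos hsa hsb), Real.log_rpow (mul_pos hq hsb),
        Real.log_mul hsa.ne' hsb.ne', Real.log_mul hq.ne' hsb.ne', hlq, hlsa, hlsb,
        hPdef, Real.log_mul (Real.rpow_pos_of_pos ha _).ne'
          (Real.rpow_pos_of_pos hb _).ne',
        Real.log_rpow ha, Real.log_rpow hb]
      ring
    have harg : (q * sb) / (sa * sb) = h ^ ((1 : ℝ) / 4) := by
      apply eq_of_log_eq (by positivity) ht
      rw [Real.log_div (mul_pos hq hsb).ne' (mul_pos hsa hsb).ne',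
        Real.log_mul hq.ne' hsb.ne', Real.log_mul hsa.ne' hsb.ne',
        Real.log_rpow hhpos, hlq, hlsa, hlsb, hlh]
      ring
    have hz := zuo (x := sa * sb) (y := q * sb) (l := 2 - 4 * v) (mul_pos hsa hsb)
      (mul_pos hq hsb) (by linarith) (by linarith)
    rw [harg, hmono, ← hrh1v, ← hCdef] at hz
    have hid : (1 - v) * a + v * b -
        ((1 - v) * (sa - sb) ^ 2 - (1 - 2 * v) * (q - sb) ^ 2)
        = 2 * (sa * sb) - ((1 - (2 - 4 * v)) * (sa * sb) + (2 - 4 * v) * (q * sb)) := by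
      linear_combination (v - 1) * hsa2 + (-v) * hsb2 + (1 - 2 * v) * hq2
    rw [hr1v]
    linarith
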